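/- Let n ≥ 1 and let η₁, …, ηₙ be real numbers. For k = 1, …, n let S_k denote the k-th elementary symmetric polynomial of η₁, …, ηₙ, and define φ(η) = Σ_{i=1}^n ηᵢ² Π_{j ≠ i} (1 − 2ηⱼ) + Π_{j=1}^n (1 − 2ηⱼ). Then the identity φ(η) = (1 − S₁) · [ 1 + Σ_{k=1}^n (−1)ᵏ 2^{k−1} S_k ] + Σ_{k=3}^n (−1)^{k−1} (k−2) 2^{k−2} S_k holds for all η ∈ ℝⁿ. -/

import Mathlib

open Finset

/-- The `k`-th elementary symmetric polynomial of `η₁, …, ηₙ`. -/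
def esym (n : ℕ) (η : Fin n → ℝ) (k : ℕ) : ℝ :=
  ∑ t ∈ Finset.univ.powersetCard k, ∏ i ∈ t, η i

/-- The polynomial `φ(η) = ∑ᵢ ηᵢ² ∏_{j≠i} (1 − 2ηⱼ) + ∏ⱼ (1 − 2ηⱼ)`. -/
def phi (n : ℕ) (η : Fin n → ℝ) : ℝ :=
  ∑ i, (η i) ^ 2 * ∏ j ∈ Finset.univ.erase i, (1 - 2 * η j)
    + ∏ j, (1 - 2 * η j)


namespace PhiAux
variable {n : ℕ} (η : Fin n → ℝ)

/-- elementary symmetric polynomial over a finset -/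
noncomputable def es (s : Finset (Fin n)) (k : ℕ) : ℝ :=
  ∑ t ∈ s.powersetCard k, ∏ i ∈ t, η i

lemma es_zero (s : Finset (Fin n)) : es η s 0 = 1 := by simp [es]

lemma es_one (s : Finset (Fin n)) : es η s 1 = ∑ i ∈ s, η i := by
  simp [es, powersetCard_one, sum_map]

lemma es_eq_zero {s : Finset (Fin n)} {k : ℕ} (h : s.card < k) : es η s k = 0 := by
  simp [es, powersetCard_eq_empty.2 h]

lemma es_insert {a : Fin n} {s : Finset (Fin n)} (h : a ∉ s) (k : ℕ) :
    es η (insert a s) (k + 1) = es η s (k + 1) + η a * es η s k := by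
  rw [es, powersetCard_succ_insert h, sum_union, sum_image]
  · rw [es, es, mul_sum]
    congr 1
    refine sum_congr rfl fun t ht => ?_
    rw [prod_insert fun hmem => h ((mem_powersetCard.1 ht).1 hmem)]
  · intro t ht u hu htu
    have ht' := (mem_powersetCard.1 ht).1
    have hu' := (mem_powersetCard.1 hu).1
    have : ∀ v : Finset (Fin n), v ⊆ s → (insert a v).erase a = v := fun v hv => by
      rw [erase_insert fun hmem => h (hv hmem)]
    rw [← this t ht', ← this u hu', htu]
  · rw [disjoint_left]
    intro t ht ht'
    obtain ⟨u, hu, rfl⟩ := mem_image.1 ht'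
    exact h ((mem_powersetCard.1 ht).1 (mem_insert_self a u))

lemma prod_one_sub (s : Finset (Fin n)) :
    ∏ j ∈ s, (1 - 2 * η j) = ∑ k ∈ range (s.card + 1), (-2 : ℝ) ^ k * es η s k := by
  have : ∀ j ∈ s, (1 - 2 * η j) = (-2 * η j) + 1 := fun j _ => by ring
  rw [prod_congr rfl this, prod_add]
  rw [sum_powerset]
  refine sum_congr rfl fun k _ => ?_
  rw [es, mul_sum]
  refine sum_congr rfl fun t ht => ?_
  have hc := (mem_powersetCard.1 ht).2
  rw [prod_const_one, mul_one, ← hc, prod_mul_distrib, prod_const]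

lemma sum_mul_es_erase (s : Finset (Fin n)) (k : ℕ) :
    ∑ i ∈ s, η i * es η (s.erase i) k = ((k : ℝ) + 1) * es η s (k + 1) := by
  have lhs : ∑ i ∈ s, η i * es η (s.erase i) k
      = ∑ x ∈ s.sigma (fun i => (s.erase i).powersetCard k), ∏ j ∈ insert x.1 x.2, η j := by
    rw [sum_sigma]
    refine sum_congr rfl fun i _ => ?_
    rw [es, mul_sum]
    refine sum_congr rfl fun t ht => ?_
    rw [prod_insert fun hmem =>
      (notMem_erase i s) ((mem_powersetCard.1 ht).1 hmem)]
  have rhs : ((k : ℝ) + 1) * es η s (k + 1)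
      = ∑ x ∈ (s.powersetCard (k + 1)).sigma (fun u => u), ∏ j ∈ x.1, η j := by
    rw [sum_sigma, es, mul_sum]
    refine sum_congr rfl fun u hu => ?_
    rw [show (∑ i ∈ u, ∏ j ∈ (⟨u, i⟩ : Σ _ : Finset (Fin n), Fin n).fst, η j)
        = ∑ _i ∈ u, ∏ j ∈ u, η j from rfl, sum_const, (mem_powersetCard.1 hu).2, nsmul_eq_mul]
    push_cast; ring
  rw [lhs, rhs]
  refine sum_nbij' (fun x => ⟨insert x.1 x.2, x.1⟩) (fun y => ⟨y.2, y.1.erase y.2⟩)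
    ?_ ?_ ?_ ?_ ?_
  · rintro ⟨i, t⟩ hx
    rw [mem_sigma] at hx ⊢
    obtain ⟨hi, ht⟩ := hx
    obtain ⟨hts, htc⟩ := mem_powersetCard.1 ht
    have hit : i ∉ t := fun hmem => notMem_erase i s (hts hmem)
    refine ⟨mem_powersetCard.2 ⟨?_, ?_⟩, mem_insert_self _ _⟩
    · exact insert_subset hi (hts.trans (erase_subset i s))
    · rw [card_insert_of_notMem hit, htc]
  · rintro ⟨u, i⟩ hy
    rw [mem_sigma] at hy ⊢
    obtain ⟨hu, hi⟩ := hy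
    obtain ⟨hus, huc⟩ := mem_powersetCard.1 hu
    refine ⟨hus hi, mem_powersetCard.2 ⟨?_, ?_⟩⟩
    · intro j hj
      exact mem_erase.2 ⟨(mem_erase.1 hj).1, hus ((mem_erase.1 hj).2)⟩
    · rw [card_erase_of_mem hi, huc]; rfl
  · rintro ⟨i, t⟩ hx
    rw [mem_sigma] at hx
    have hit : i ∉ t := fun hmem => notMem_erase i s ((mem_powersetCard.1 hx.2).1 hmem)
    simp [erase_insert hit]
  · rintro ⟨u, i⟩ hy
    rw [mem_sigma] at hy
    simp [insert_erase hy.2]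
  · rintro ⟨i, t⟩ hx
    rfl

lemma mul_es_erase {s : Finset (Fin n)} {i : Fin n} (hi : i ∈ s) (k : ℕ) :
    η i * es η (s.erase i) k = es η s (k + 1) - es η (s.erase i) (k + 1) := by
  have h := es_insert η (notMem_erase i s) k
  rw [insert_erase hi] at h
  linarith

lemma sum_sq_mul_es_erase (s : Finset (Fin n)) (k : ℕ) :
    ∑ i ∈ s, η i ^ 2 * es η (s.erase i) k
      = es η s 1 * es η s (k + 1) - ((k : ℝ) + 2) * es η s (k + 2) := by
  have h1 : ∀ i ∈ s, η i ^ 2 * es η (s.erase i) k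
      = η i * es η s (k + 1) - η i * es η (s.erase i) (k + 1) := fun i hi => by
    rw [pow_two, mul_assoc, mul_es_erase η hi k]; ring
  rw [sum_congr rfl h1, sum_sub_distrib, ← sum_mul, ← es_one, sum_mul_es_erase,
    show k + 1 + 1 = k + 2 from rfl]
  push_cast; ring

lemma sum_range_pad {g : ℕ → ℝ} {M M' : ℕ} (h : M ≤ M') (hg : ∀ k, M ≤ k → g k = 0) :
    ∑ k ∈ range M', g k = ∑ k ∈ range M, g k := by
  refine (sum_subset (range_subset_range.2 h) fun k _ hk => hg k ?_).symm
  simpa using hk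

end PhiAux

open PhiAux in
/-- The identity
`φ(η) = (1 − S₁)·[1 + ∑_{k=1}^n (−1)ᵏ 2^{k−1} S_k] + ∑_{k=3}^n (−1)^{k−1}(k−2) 2^{k−2} S_k`. -/
theorem phi_esym_identity (n : ℕ) (hn : 1 ≤ n) (η : Fin n → ℝ) :
    phi n η
      = (1 - esym n η 1)
          * (1 + ∑ k ∈ Finset.Icc 1 n, (-1 : ℝ) ^ k * 2 ^ (k - 1) * esym n η k)
        + ∑ k ∈ Finset.Icc 3 n, (-1 : ℝ) ^ (k - 1) * ((k : ℝ) - 2) * 2 ^ (k - 2) * esym n η k := by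
  classical
  set S : ℕ → ℝ := esym n η with hSdef
  have hes : ∀ k, S k = es η Finset.univ k := fun k => rfl
  have hS0 : S 0 = 1 := by rw [hes]; exact es_zero η _
  have hSz : ∀ k, n < k → S k = 0 := fun k hk => by
    rw [hes]; exact es_eq_zero η (by simpa using hk)
  have hneg2 : ∀ k : ℕ, (-2 : ℝ) ^ k = (-1) ^ k * 2 ^ k := fun k => by
    rw [show (-2 : ℝ) = -1 * 2 by norm_num, mul_pow]
  -- peel lemma
  have hpeel : ∀ j : ℕ, ∑ k ∈ range (n + 1), (-2 : ℝ) ^ k * S (k + j)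
      = S j - 2 * ∑ k ∈ range (n + 1), (-2 : ℝ) ^ k * S (k + (j + 1)) := by
    intro j
    rw [sum_range_succ']
    have e1 : ∀ k ∈ range n, (-2 : ℝ) ^ (k + 1) * S (k + 1 + j)
        = -2 * ((-2 : ℝ) ^ k * S (k + (j + 1))) := fun k _ => by
      rw [show k + 1 + j = k + (j + 1) from by omega, pow_succ]; ring
    rw [sum_congr rfl e1, ← mul_sum,
      ← sum_range_pad (Nat.le_succ n) (fun k hk => by rw [hSz (k + (j + 1)) (by omega)]; ring)]
    rw [pow_zero, one_mul, Nat.zero_add]; ring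
  -- step 1 : phi in terms of S
  have hcard : ∀ i : Fin n, (Finset.univ.erase i).card + 1 = n := fun i => by
    rw [card_erase_of_mem (mem_univ i), card_univ, Fintype.card_fin]; omega
  have h1 : ∑ i, (η i) ^ 2 * ∏ j ∈ Finset.univ.erase i, (1 - 2 * η j)
      = ∑ k ∈ range (n + 1),
          (-2 : ℝ) ^ k * (S 1 * S (k + 1) - ((k : ℝ) + 2) * S (k + 2)) := by
    have e1 : ∀ i : Fin n, (η i) ^ 2 * ∏ j ∈ Finset.univ.erase i, (1 - 2 * η j)
        = ∑ k ∈ range n, (-2 : ℝ) ^ k * ((η i) ^ 2 * es η (Finset.univ.erase i) k) := by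
      intro i
      rw [prod_one_sub, show (Finset.univ.erase i).card + 1 = n from hcard i, mul_sum]
      exact sum_congr rfl fun k _ => by ring
    rw [sum_congr rfl fun i _ => e1 i, sum_comm]
    have e2 : ∀ k ∈ range n,
        ∑ i, (-2 : ℝ) ^ k * ((η i) ^ 2 * es η (Finset.univ.erase i) k)
        = (-2 : ℝ) ^ k * (S 1 * S (k + 1) - ((k : ℝ) + 2) * S (k + 2)) := fun k _ => by
      rw [← mul_sum, sum_sq_mul_es_erase, ← hes, ← hes, ← hes]
    rw [sum_congr rfl e2]
    exact (sum_range_pad (Nat.le_succ n) (fun k hk => by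
      rw [hSz (k + 1) (by omega), hSz (k + 2) (by omega)]; ring)).symm
  have h2 : ∏ j, (1 - 2 * η j) = ∑ k ∈ range (n + 1), (-2 : ℝ) ^ k * S k := by
    rw [prod_one_sub, card_univ, Fintype.card_fin]
    exact sum_congr rfl fun k _ => by rw [← hes]
  -- the two Icc sums
  have hIcc1 : ∑ k ∈ Finset.Icc 1 n, (-1 : ℝ) ^ k * 2 ^ (k - 1) * S k
      = -(∑ k ∈ range (n + 1), (-2 : ℝ) ^ k * S (k + 1)) := by
    rw [← Finset.Ico_add_one_right_eq_Icc, sum_Ico_eq_sum_range,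
      show n + 1 - 1 = n from rfl,
      sum_range_pad (Nat.le_succ n) (fun k hk => by rw [hSz (k + 1) (by omega)]; ring),
      ← sum_neg_distrib]
    refine sum_congr rfl fun i _ => ?_
    rw [show 1 + i - 1 = i from by omega, show 1 + i = i + 1 from by omega, hneg2]
    ring
  have hIcc3 : ∑ k ∈ Finset.Icc 3 n, (-1 : ℝ) ^ (k - 1) * ((k : ℝ) - 2) * 2 ^ (k - 2) * S k
      = 2 * ∑ k ∈ range (n + 1), ((k : ℝ) + 3) * (-2 : ℝ) ^ k * S (k + 3)
        - 4 * ∑ k ∈ range (n + 1), (-2 : ℝ) ^ k * S (k + 3) := by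
    rw [← Finset.Ico_add_one_right_eq_Icc, sum_Ico_eq_sum_range,
      ← sum_range_pad (M := n + 1 - 3) (M' := n + 1) (by omega)
        (g := fun k => (-1 : ℝ) ^ (3 + k - 1) * ((3 + k : ℕ) - 2 : ℝ) * 2 ^ (3 + k - 2) * S (3 + k))
        (fun k hk => by simp only [hSz (3 + k) (by omega)]; ring)]
    calc ∑ k ∈ range (n + 1),
            (-1 : ℝ) ^ (3 + k - 1) * ((3 + k : ℕ) - 2 : ℝ) * 2 ^ (3 + k - 2) * S (3 + k)
        = ∑ k ∈ range (n + 1),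
            (2 * (((k : ℝ) + 3) * (-2 : ℝ) ^ k * S (k + 3))
              - 4 * ((-2 : ℝ) ^ k * S (k + 3))) := by
          refine sum_congr rfl fun i _ => ?_
          rw [show 3 + i - 1 = i + 2 from by omega, show 3 + i - 2 = i + 1 from by omega,
            show 3 + i = i + 3 from by omega, hneg2]
          push_cast; ring
      _ = 2 * ∑ k ∈ range (n + 1), ((k : ℝ) + 3) * (-2 : ℝ) ^ k * S (k + 3)
            - 4 * ∑ k ∈ range (n + 1), (-2 : ℝ) ^ k * S (k + 3) := by
          rw [sum_sub_distrib, ← mul_sum, ← mul_sum]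
  -- abbreviations and linear relations
  have hG0 : ∑ k ∈ range (n + 1), (-2 : ℝ) ^ k * S k
      = 1 - 2 * ∑ k ∈ range (n + 1), (-2 : ℝ) ^ k * S (k + 1) := by
    have h := hpeel 0
    simp only [Nat.add_zero, Nat.zero_add] at h
    rw [h, hS0]
  have hG1 : ∑ k ∈ range (n + 1), (-2 : ℝ) ^ k * S (k + 1)
      = S 1 - 2 * ∑ k ∈ range (n + 1), (-2 : ℝ) ^ k * S (k + 2) := by
    have h := hpeel 1
    norm_num at h
    exact h
  have hG2 : ∑ k ∈ range (n + 1), (-2 : ℝ) ^ k * S (k + 2)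
      = S 2 - 2 * ∑ k ∈ range (n + 1), (-2 : ℝ) ^ k * S (k + 3) := by
    have h := hpeel 2
    norm_num at h
    exact h
  -- split the first sum
  have hsplit : ∑ k ∈ range (n + 1),
        (-2 : ℝ) ^ k * (S 1 * S (k + 1) - ((k : ℝ) + 2) * S (k + 2))
      = S 1 * ∑ k ∈ range (n + 1), (-2 : ℝ) ^ k * S (k + 1)
        - ∑ k ∈ range (n + 1), ((k : ℝ) + 2) * (-2 : ℝ) ^ k * S (k + 2) := by
    rw [mul_sum, ← sum_sub_distrib]
    exact sum_congr rfl fun k _ => by ring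
  have hB : ∑ k ∈ range (n + 1), ((k : ℝ) + 2) * (-2 : ℝ) ^ k * S (k + 2)
      = 2 * S 2 - 2 * ∑ k ∈ range (n + 1), ((k : ℝ) + 3) * (-2 : ℝ) ^ k * S (k + 3) := by
    rw [sum_range_succ']
    have e1 : ∀ k ∈ range n, (((k + 1 : ℕ) : ℝ) + 2) * (-2 : ℝ) ^ (k + 1) * S (k + 1 + 2)
        = -2 * (((k : ℝ) + 3) * (-2 : ℝ) ^ k * S (k + 3)) := fun k _ => by
      rw [show k + 1 + 2 = k + 3 from rfl, pow_succ]; push_cast; ring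
    rw [sum_congr rfl e1, ← mul_sum,
      ← sum_range_pad (Nat.le_succ n) (fun k hk => by rw [hSz (k + 3) (by omega)]; ring)]
    simp only [Nat.zero_add, Nat.cast_zero]
    ring
  -- assemble
  unfold phi
  rw [h1, h2, hIcc1, hIcc3, hsplit, hG0]
  linear_combination (-1 : ℝ) * hB - hG1 + 2 * hG2
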